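/- For any 3-cycle (ijk) in S₄ with distinct i,j,k, the sum of the operators for the cycle and its inverse on (ℂ²)^⊗4 equals (1/2)(I + σᵢ·σⱼ + σⱼ·σₖ + σᵢ·σₖ). -/

import Mathlib

open Matrix

/-- The three Pauli matrices. -/
noncomputable def pauli : Fin 3 → Matrix (Fin 2) (Fin 2) ℂ :=
  ![!![0, 1; 1, 0], !![0, -Complex.I; Complex.I, 0], !![1, 0; 0, -1]]

/-- The operator on (ℂ^d)^⊗n permuting tensor factors according to π:
it sends `e_{i₁} ⊗ ... ⊗ e_{i_n}` to `e_{i_{π⁻¹(1)}} ⊗ ... ⊗ e_{i_{π⁻¹(n)}}`. -/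
noncomputable def permOp (d n : ℕ) (π : Equiv.Perm (Fin n)) :
    Matrix (Fin n → Fin d) (Fin n → Fin d) ℂ :=
  Matrix.of fun f g => if f = g ∘ ⇑π⁻¹ then 1 else 0

/-- The one-site operator acting as the 2×2 matrix `A` on tensor factor `i`
of (ℂ²)^⊗n and as the identity elsewhere. -/
noncomputable def opAt {n : ℕ} (i : Fin n) (A : Matrix (Fin 2) (Fin 2) ℂ) :
    Matrix (Fin n → Fin 2) (Fin n → Fin 2) ℂ :=
  Matrix.of fun f g => ∏ k, if k = i then A (f k) (g k) else (if f k = g k then 1 else 0)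

/-- σᵢ·σⱼ = ∑_{a ∈ {x,y,z}} (σᵃ at leg i)(σᵃ at leg j) on (ℂ²)^⊗n. -/
noncomputable def sdot {n : ℕ} (i j : Fin n) :
    Matrix (Fin n → Fin 2) (Fin n → Fin 2) ℂ :=
  ∑ a : Fin 3, opAt i (pauli a) * opAt j (pauli a)


noncomputable def tpr {n : ℕ} (M : Fin n → Matrix (Fin 2) (Fin 2) ℂ) :
    Matrix (Fin n → Fin 2) (Fin n → Fin 2) ℂ :=
  Matrix.of fun f g => ∏ k, M k (f k) (g k)

lemma tpr_mul {n : ℕ} (M N : Fin n → Matrix (Fin 2) (Fin 2) ℂ) :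
    tpr M * tpr N = tpr (fun k => M k * N k) := by
  ext f g
  simp only [tpr, Matrix.mul_apply, of_apply]
  rw [Finset.prod_univ_sum]
  simp [Fintype.piFinset_univ, Finset.prod_mul_distrib]

lemma permOp_mul (d n : ℕ) (π ρ : Equiv.Perm (Fin n)) :
    permOp d n (π * ρ) = permOp d n π * permOp d n ρ := by
  ext f g
  simp only [permOp, Matrix.mul_apply, of_apply, mul_ite, mul_one, mul_zero, ite_mul, one_mul, zero_mul]
  rw [Finset.sum_ite_eq' Finset.univ (g ∘ ⇑ρ⁻¹) (fun h => if f = h ∘ ⇑π⁻¹ then 1 else 0)]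
  simp [_root_.mul_inv_rev, Function.comp_assoc]

lemma opAt_eq {n : ℕ} (i : Fin n) (A : Matrix (Fin 2) (Fin 2) ℂ) :
    opAt i A = tpr (fun k => if k = i then A else 1) := by
  ext f g
  simp only [opAt, tpr, of_apply]
  refine Finset.prod_congr rfl fun k _ => ?_
  split_ifs <;> simp [Matrix.one_apply, *]

lemma one_eq_tprod {n : ℕ} :
    (1 : Matrix (Fin n → Fin 2) (Fin n → Fin 2) ℂ) = tpr (fun _ => 1) := by
  ext f g
  simp [tpr, Matrix.one_apply, Finset.prod_boole, funext_iff]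

lemma pauli_sum (x z y w : Fin 2) :
    (if x = z then (1:ℂ) else 0) * (if y = w then 1 else 0)
      + ∑ a : Fin 3, pauli a x z * pauli a y w
    = 2 * ((if x = w then 1 else 0) * (if y = z then 1 else 0)) := by
  fin_cases x <;> fin_cases z <;> fin_cases y <;> fin_cases w <;>
    simp [pauli, Fin.sum_univ_three] <;> norm_num

lemma pauli_anticomm (a b : Fin 3) :
    pauli a * pauli b + pauli b * pauli a
      = if a = b then (2:ℂ) • (1 : Matrix (Fin 2) (Fin 2) ℂ) else 0 := by
  fin_cases a <;> fin_cases b <;> ext x y <;> fin_cases x <;> fin_cases y <;>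
    simp [pauli, Matrix.mul_apply, Fin.sum_univ_two, Matrix.one_apply] <;> norm_num

lemma sdot_eq {n : ℕ} (i j : Fin n) (hij : i ≠ j) :
    sdot i j = ∑ a : Fin 3,
      tpr (fun k => if k = i then pauli a else if k = j then pauli a else 1) := by
  unfold sdot
  refine Finset.sum_congr rfl fun a _ => ?_
  rw [opAt_eq, opAt_eq, tpr_mul]
  have : (fun k => (if k = i then pauli a else 1) * (if k = j then pauli a else 1))
      = (fun k => if k = i then pauli a else if k = j then pauli a else 1) := by
    funext k
    by_cases h1 : k = i
    · subst h1; simp [hij]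
    · by_cases h2 : k = j <;> simp [h1, h2, hij.symm]
  rw [this]

lemma tpr_add_slot {n : ℕ} (j : Fin n) (M N : Fin n → Matrix (Fin 2) (Fin 2) ℂ)
    (h : ∀ l, l ≠ j → M l = N l) :
    tpr M + tpr N = tpr (Function.update M j (M j + N j)) := by
  ext f g
  simp only [tpr, of_apply, Matrix.add_apply]
  rw [← Finset.mul_prod_erase Finset.univ _ (Finset.mem_univ j),
      ← Finset.mul_prod_erase Finset.univ (fun k => N k (f k) (g k)) (Finset.mem_univ j),
      ← Finset.mul_prod_erase Finset.univ (fun k => Function.update M j (M j + N j) k (f k) (g k)) (Finset.mem_univ j)]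
  have h1 : ∀ P : Fin n → Matrix (Fin 2) (Fin 2) ℂ, (∀ l, l ≠ j → P l = M l) →
      ∏ k ∈ Finset.univ.erase j, P k (f k) (g k) = ∏ k ∈ Finset.univ.erase j, M k (f k) (g k) := by
    intro P hP
    exact Finset.prod_congr rfl fun l hl => by rw [hP l (Finset.mem_erase.mp hl).1]
  rw [h1 (fun k => N k) (fun l hl => (h l hl).symm),
      h1 (Function.update M j (M j + N j)) (fun l hl => Function.update_of_ne hl _ _)]
  simp [Function.update_self, Matrix.add_apply, add_mul]

lemma tpr_zero_slot {n : ℕ} (j : Fin n) (M : Fin n → Matrix (Fin 2) (Fin 2) ℂ)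
    (h : M j = 0) : tpr M = 0 := by
  ext f g
  simp only [tpr, of_apply, Matrix.zero_apply]
  rw [← Finset.mul_prod_erase Finset.univ _ (Finset.mem_univ j), h]
  simp

lemma tpr_smul_slot {n : ℕ} (j : Fin n) (c : ℂ) (M N : Fin n → Matrix (Fin 2) (Fin 2) ℂ)
    (h : ∀ l, l ≠ j → M l = N l) (hj : M j = c • N j) :
    tpr M = c • tpr N := by
  ext f g
  simp only [tpr, of_apply, Matrix.smul_apply, smul_eq_mul]
  rw [← Finset.mul_prod_erase Finset.univ _ (Finset.mem_univ j),
      ← Finset.mul_prod_erase Finset.univ (fun k => N k (f k) (g k)) (Finset.mem_univ j)]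
  rw [Finset.prod_congr rfl fun l hl => by rw [h l (Finset.mem_erase.mp hl).1]]
  rw [hj]
  simp [mul_assoc]

lemma permOp_swap {n : ℕ} (i j : Fin n) (hij : i ≠ j) :
    permOp 2 n (Equiv.swap i j) = (1/2 : ℂ) • (1 + sdot i j) := by
  rw [sdot_eq i j hij]
  ext f g
  simp only [permOp, of_apply, Matrix.smul_apply, Matrix.add_apply, Matrix.one_apply,
    Matrix.sum_apply, tpr, smul_eq_mul, Equiv.swap_inv]
  have hji : j ≠ i := hij.symm
  set s := (Finset.univ.erase i).erase j with hs
  have hjs : j ∈ Finset.univ.erase i := Finset.mem_erase.mpr ⟨hji, Finset.mem_univ j⟩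
  have split : ∀ F : Fin n → ℂ, ∏ k, F k = F i * (F j * ∏ k ∈ s, F k) := by
    intro F
    rw [← Finset.mul_prod_erase Finset.univ F (Finset.mem_univ i),
        ← Finset.mul_prod_erase _ F hjs]
  have hmem : ∀ k ∈ s, k ≠ i ∧ k ≠ j := by
    intro k hk
    have h1 := Finset.mem_erase.mp hk
    have h2 := Finset.mem_erase.mp h1.2
    exact ⟨h2.1, h1.1⟩
  have hid : (if f = g then (1:ℂ) else 0) = ∏ k, (if f k = g k then (1:ℂ) else 0) := by
    rw [Finset.prod_boole]
    simp [funext_iff]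
  have happ : ∀ (a : Fin 3) (kk : Fin n),
      (if kk = i then pauli a else if kk = j then pauli a else 1) (f kk) (g kk)
      = if kk = i then pauli a (f kk) (g kk) else if kk = j then pauli a (f kk) (g kk)
          else (if f kk = g kk then (1:ℂ) else 0) := by
    intro a kk; split_ifs <;> simp [Matrix.one_apply, *]
  have hterm : ∀ a : Fin 3,
      (∏ kk, (if kk = i then pauli a else if kk = j then pauli a else 1) (f kk) (g kk))
      = pauli a (f i) (g i) * pauli a (f j) (g j) * ∏ kk ∈ s, (if f kk = g kk then (1:ℂ) else 0) := by
    intro a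
    rw [Finset.prod_congr rfl (fun kk _ => happ a kk), split]
    rw [if_pos rfl, if_neg hji, if_pos rfl]
    rw [Finset.prod_congr rfl (fun kk hk => by
      obtain ⟨h1, h2⟩ := hmem kk hk
      rw [if_neg h1, if_neg h2])]
    ring
  have hiff : (f = g ∘ ⇑(Equiv.swap i j)) ↔
      (f i = g j ∧ f j = g i ∧ ∀ kk ∈ s, f kk = g kk) := by
    rw [funext_iff]
    constructor
    · intro h
      refine ⟨by simpa using h i, by simpa using h j, fun kk hk => ?_⟩
      obtain ⟨h1, h2⟩ := hmem kk hk
      simpa [Equiv.swap_apply_of_ne_of_ne h1 h2] using h kk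
    · rintro ⟨h1, h2, h3⟩ kk
      rcases eq_or_ne kk i with rfl | hki
      · simpa using h1
      rcases eq_or_ne kk j with rfl | hkj
      · simpa using h2
      · have : kk ∈ s := by simp [hs, Finset.mem_erase, hki, hkj]
        simpa [Equiv.swap_apply_of_ne_of_ne hki hkj] using h3 kk this
  rw [hid, split (fun kk => if f kk = g kk then (1:ℂ) else 0)]
  simp only [hterm]
  rw [← Finset.sum_mul, ← mul_assoc
    (if f i = g i then (1:ℂ) else 0), ← add_mul, pauli_sum]
  rw [Finset.prod_boole]
  by_cases H1 : f i = g j <;> by_cases H2 : f j = g i <;>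
    by_cases H3 : ∀ kk ∈ s, f kk = g kk <;>
    simp [hiff, H1, H2, H3] <;> norm_num

lemma sdot_anticomm {n : ℕ} (i j k : Fin n) (hij : i ≠ j) (hjk : j ≠ k) (hik : i ≠ k) :
    sdot i j * sdot j k + sdot j k * sdot i j = (2:ℂ) • sdot i k := by
  have hji : j ≠ i := hij.symm
  have hkj : k ≠ j := hjk.symm
  have hki : k ≠ i := hik.symm
  set M : Fin 3 → Fin n → Matrix (Fin 2) (Fin 2) ℂ :=
    fun a l => if l = i then pauli a else if l = j then pauli a else 1 with hM
  set N : Fin 3 → Fin n → Matrix (Fin 2) (Fin 2) ℂ :=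
    fun b l => if l = j then pauli b else if l = k then pauli b else 1 with hN
  set T : Fin 3 → Fin n → Matrix (Fin 2) (Fin 2) ℂ :=
    fun a l => if l = i then pauli a else if l = k then pauli a else 1 with hT
  have key : ∀ a b : Fin 3, tpr (M a) * tpr (N b) + tpr (N b) * tpr (M a)
      = if a = b then (2:ℂ) • tpr (T a) else 0 := by
    intro a b
    rw [tpr_mul, tpr_mul]
    have hagree : ∀ l, l ≠ j → M a l * N b l = N b l * M a l := by
      intro l hl
      rcases eq_or_ne l i with rfl | h1
      · simp [hM, hN, hij, hik]
      rcases eq_or_ne l k with rfl | h2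
      · simp [hM, hN, hki, hkj]
      · simp [hM, hN, h1, h2, hl]
    rw [tpr_add_slot j _ _ hagree]
    have hslot : M a j * N b j + N b j * M a j
        = if a = b then (2:ℂ) • (1 : Matrix (Fin 2) (Fin 2) ℂ) else 0 := by
      simp [hM, hN, hji]
      exact pauli_anticomm a b
    rw [hslot]
    rcases eq_or_ne a b with rfl | hab
    · rw [if_pos rfl, if_pos rfl]
      refine tpr_smul_slot j 2 _ _ (fun l hl => ?_) ?_
      · rw [Function.update_of_ne hl]
        rcases eq_or_ne l i with rfl | h1
        · simp [hM, hN, hT, hij, hik]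
        rcases eq_or_ne l k with rfl | h2
        · simp [hM, hN, hT, hki, hkj]
        · simp [hM, hN, hT, h1, h2, hl]
      · rw [Function.update_self]
        simp [hT, hji, hjk]
    · rw [if_neg hab, if_neg hab]
      exact tpr_zero_slot j _ (Function.update_self _ _ _)
  rw [sdot_eq i j hij, sdot_eq j k hjk, sdot_eq i k hik,
      Finset.sum_mul_sum, Finset.sum_mul_sum]
  rw [Finset.sum_comm (s := Finset.univ) (t := Finset.univ)
    (f := fun b a => tpr (N b) * tpr (M a))]
  rw [← Finset.sum_add_distrib]
  rw [Finset.smul_sum]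
  refine Finset.sum_congr rfl fun a _ => ?_
  rw [← Finset.sum_add_distrib]
  rw [Finset.sum_congr rfl fun b _ => key a b]
  simp
  rfl

theorem three_cycle_add_inv_eq_pauli (i j k : Fin 4) (hij : i ≠ j) (hjk : j ≠ k) (hik : i ≠ k) :
    permOp 2 4 (Equiv.swap i j * Equiv.swap j k)
      + permOp 2 4 ((Equiv.swap i j * Equiv.swap j k)⁻¹)
      = (1/2 : ℂ) • ((1 : Matrix (Fin 4 → Fin 2) (Fin 4 → Fin 2) ℂ)
          + sdot i j + sdot j k + sdot i k) := by
  have hinv : (Equiv.swap i j * Equiv.swap j k)⁻¹ = Equiv.swap j k * Equiv.swap i j := by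
    rw [_root_.mul_inv_rev, Equiv.swap_inv, Equiv.swap_inv]
  rw [hinv, permOp_mul, permOp_mul, permOp_swap i j hij, permOp_swap j k hjk]
  have hA := sdot_anticomm i j k hij hjk hik
  set a := sdot i j
  set b := sdot j k
  set c := sdot i k
  have e1 : ((1/2:ℂ) • (1 + a)) * ((1/2:ℂ) • (1 + b)) = (1/4:ℂ) • ((1+a)*(1+b)) := by
    rw [smul_mul_smul_comm]; norm_num
  have e2 : ((1/2:ℂ) • (1 + b)) * ((1/2:ℂ) • (1 + a)) = (1/4:ℂ) • ((1+b)*(1+a)) := by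
    rw [smul_mul_smul_comm]; norm_num
  rw [e1, e2, ← smul_add]
  have kk : (1+a)*(1+b) + (1+b)*(1+a) = ((1:Matrix (Fin 4 → Fin 2) (Fin 4 → Fin 2) ℂ)+1) + (a+a) + (b+b) + (a*b + b*a) := by
    noncomm_ring
  rw [kk, hA]
  module
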